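/- Let M be a compact smooth manifold and E a smooth complex vector bundle of constant rank k over M. Then for every point x ∈ M the complex vector space Γ^∞(E)/(I_x·Γ^∞(E)) has dimension exactly k; that is, the module of sections Γ^∞(E) is of constant rank k. -/

import Mathlib

open Bundle Manifold
open scoped TensorProduct

local notation "∞" => (⊤ : ℕ∞)

noncomputable section

/-- Complex multiplication and addition are smooth over `ℝ`, so that the complex-valued smooth
functions on a real manifold form a (comm)ring. -/
instance : ContMDiffRing 𝓘(ℝ, ℂ) ∞ ℂ where
  contMDiff_add := by
    rw [contMDiff_iff]
    refine ⟨continuous_add, fun x y => ?_⟩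
    simp only [mfld_simps]
    exact contDiff_add.contDiffOn
  contMDiff_mul := by
    rw [contMDiff_iff]
    refine ⟨continuous_mul, fun x y => ?_⟩
    simp only [mfld_simps]
    exact contDiff_mul.contDiffOn

variable {EM : Type*} [NormedAddCommGroup EM] [NormedSpace ℝ EM] [FiniteDimensional ℝ EM]
  {HM : Type*} [TopologicalSpace HM] {IM : ModelWithCorners ℝ EM HM}
  {M : Type*} [TopologicalSpace M] [ChartedSpace HM M] [IsManifold IM ∞ M]
  [T2Space M] [SecondCountableTopology M] [CompactSpace M]

/-- The constant functions make the smooth complex-valued functions a `ℂ`-algebra. -/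
instance : Algebra ℂ C^∞⟮IM, M; 𝓘(ℝ, ℂ), ℂ⟯ :=
  RingHom.toAlgebra
    { toFun := fun c => ⟨fun _ => c, contMDiff_const⟩
      map_one' := rfl
      map_mul' := fun _ _ => rfl
      map_zero' := rfl
      map_add' := fun _ _ => rfl }

/-- `I_x`, the ideal of smooth complex-valued functions vanishing at the point `x`. -/
def SmoothMap.idealOfPoint (x : M) : Ideal C^∞⟮IM, M; 𝓘(ℝ, ℂ), ℂ⟯ :=
  RingHom.ker (ContMDiffMap.evalRingHom x : C^∞⟮IM, M; 𝓘(ℝ, ℂ), ℂ⟯ →+* ℂ)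

variable {F : Type*} [NormedAddCommGroup F] [NormedSpace ℂ F] [FiniteDimensional ℂ F]
  {V : M → Type*} [TopologicalSpace (TotalSpace F V)]
  [∀ x, AddCommGroup (V x)] [∀ x, Module ℂ (V x)] [∀ x, TopologicalSpace (V x)]
  [FiberBundle F V] [VectorBundle ℂ F V] [VectorBundle ℝ F V] [ContMDiffVectorBundle ∞ F V IM]

/-- Pointwise scalar multiplication of a smooth section by a smooth function. -/
instance ContMDiffSection.instSMulSmoothMap :
    SMul C^∞⟮IM, M; 𝓘(ℝ, ℂ), ℂ⟯ Cₛ^∞⟮IM; F, V⟯ := by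
  refine ⟨fun f s => ⟨fun x => f x • s x, ?_⟩⟩
  intro x₀
  have hs := s.contMDiff x₀
  have hf : ContMDiffAt IM 𝓘(ℝ, ℂ) ∞ f x₀ := f.contMDiff x₀
  rw [contMDiffAt_section] at hs ⊢
  set e := trivializationAt F V x₀
  have h1 : ContMDiffAt IM 𝓘(ℝ, F →L[ℝ] F) ∞
      (fun x => (ContinuousLinearMap.lsmul ℝ ℂ (f x) : F →L[ℝ] F)) x₀ :=
    ContDiff.comp_contMDiffAt
      (g := ⇑(ContinuousLinearMap.lsmul ℝ ℂ : ℂ →L[ℝ] F →L[ℝ] F))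
      (ContinuousLinearMap.contDiff _) hf
  refine (h1.clm_apply hs).congr_of_eventuallyEq ?_
  refine Filter.eventually_of_mem
    (e.open_baseSet.mem_nhds <| mem_baseSet_trivializationAt F V x₀) ?_
  intro x hx
  simp only [ContinuousLinearMap.lsmul_apply]
  exact (e.linear ℂ hx).2 (f x) (s x)

set_option linter.unusedSectionVars false in
@[simp]
theorem ContMDiffSection.coe_smul_smoothMap (f : C^∞⟮IM, M; 𝓘(ℝ, ℂ), ℂ⟯)
    (s : Cₛ^∞⟮IM; F, V⟯) (x : M) : (f • s) x = f x • s x :=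
  rfl

/-- The smooth sections of a smooth complex vector bundle form a module over the algebra of
smooth complex-valued functions on the base. -/
instance ContMDiffSection.instModuleSmoothMap :
    Module C^∞⟮IM, M; 𝓘(ℝ, ℂ), ℂ⟯ Cₛ^∞⟮IM; F, V⟯ where
  one_smul s := ContMDiffSection.ext fun x => one_smul ℂ (s x)
  mul_smul f g s := ContMDiffSection.ext fun x => mul_smul (f x) (g x) (s x)
  smul_zero f := ContMDiffSection.ext fun x => smul_zero (f x)
  smul_add f s t := ContMDiffSection.ext fun x => smul_add (f x) (s x) (t x)
  add_smul f g s := ContMDiffSection.ext fun x => add_smul (f x) (g x) (s x)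
  zero_smul s := ContMDiffSection.ext fun x => zero_smul ℂ (s x)

instance ContMDiffSection.instModuleComplex : Module ℂ Cₛ^∞⟮IM; F, V⟯ :=
  Module.compHom _ (algebraMap ℂ C^∞⟮IM, M; 𝓘(ℝ, ℂ), ℂ⟯)

instance ContMDiffSection.instIsScalarTowerComplex :
    IsScalarTower ℂ C^∞⟮IM, M; 𝓘(ℝ, ℂ), ℂ⟯ Cₛ^∞⟮IM; F, V⟯ :=
  ⟨fun c f s => by
    show (c • f) • s = algebraMap ℂ C^∞⟮IM, M; 𝓘(ℝ, ℂ), ℂ⟯ c • f • s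
    rw [Algebra.smul_def, mul_smul]⟩

section Aux

open Topology

set_option linter.unusedSectionVars false in
/-- Existence of a smooth bump function: value `1` at `x`, support inside an open set `U`. -/
lemma aux_exists_bump (x : M) {U : Set M} (hU : IsOpen U) (hx : x ∈ U) :
    ∃ χ : C^∞⟮IM, M; 𝓘(ℝ, ℝ), ℝ⟯, χ x = 1 ∧ tsupport ⇑χ ⊆ U := by
  obtain ⟨K, hK, hxK, hKU⟩ := exists_compact_subset hU hx
  obtain ⟨f, hf0, hf1, -⟩ := exists_contMDiffMap_zero_one_of_isClosed (I := IM) (n := ∞)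
    (isOpen_interior (s := K)).isClosed_compl (isClosed_singleton (x := x))
    (Set.disjoint_singleton_right.mpr (by simp [hxK]))
  refine ⟨f, hf1 rfl, ?_⟩
  have hsupp : Function.support ⇑f ⊆ interior K := by
    intro y hy
    by_contra hyK
    exact hy (hf0 hyK)
  calc tsupport ⇑f ⊆ closure (interior K) := closure_mono hsupp
    _ ⊆ K := closure_minimal interior_subset hK.isClosed
    _ ⊆ U := hKU

set_option linter.unusedSectionVars false in
/-- A bump function times a "constant" local section, extended by zero, is a smooth section. -/
lemma aux_contMDiff_section (e : Trivialization F (π F V)) [MemTrivializationAtlas e]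
    (χ : C^∞⟮IM, M; 𝓘(ℝ, ℝ), ℝ⟯) (hχ : tsupport ⇑χ ⊆ e.baseSet) (w : F) :
    ContMDiff IM (IM.prod 𝓘(ℝ, F)) ∞
      (fun y => TotalSpace.mk' F y (χ y • e.symm y w : V y)) := by
  intro y₀
  rw [Bundle.contMDiffAt_section]
  set e' := trivializationAt F V y₀ with he'
  have hy₀' : y₀ ∈ e'.baseSet := mem_baseSet_trivializationAt F V y₀
  by_cases hy₀ : y₀ ∈ e.baseSet
  · have h1 : ContMDiffAt IM 𝓘(ℝ, F) ∞
        (fun y => χ y • ((e.coordChangeL ℝ e' y : F →L[ℝ] F) w)) y₀ :=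
      (χ.contMDiff y₀).smul ((contMDiffAt_id.coordChangeL hy₀ hy₀').clm_apply contMDiffAt_const)
    refine h1.congr_of_eventuallyEq ?_
    filter_upwards [(e.open_baseSet.inter e'.open_baseSet).mem_nhds ⟨hy₀, hy₀'⟩] with y hy
    show (e' (TotalSpace.mk' F y (χ y • e.symm y w))).2 = χ y • e.coordChangeL ℝ e' y w
    rw [(e'.linear ℝ hy.2).map_smul, e.coordChangeL_apply e' hy]
  · have hy₀s : y₀ ∉ tsupport ⇑χ := fun h => hy₀ (hχ h)
    refine (contMDiffAt_const (c := (0 : F))).congr_of_eventuallyEq ?_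
    filter_upwards [(isOpen_compl_iff.mpr (isClosed_tsupport ⇑χ)).mem_nhds hy₀s,
      e'.open_baseSet.mem_nhds hy₀'] with y hy hy'
    show (e' (TotalSpace.mk' F y (χ y • e.symm y w))).2 = 0
    rw [image_eq_zero_of_notMem_tsupport hy, zero_smul]
    exact (e'.linear ℝ hy').map_zero

set_option linter.unusedSectionVars false in
/-- A bump function times the local coordinate representation of a smooth section,
extended by zero, is a smooth `F`-valued function. -/
lemma aux_contMDiff_read (e : Trivialization F (π F V)) [MemTrivializationAtlas e]
    (χ : C^∞⟮IM, M; 𝓘(ℝ, ℝ), ℝ⟯) (hχ : tsupport ⇑χ ⊆ e.baseSet) (s : Cₛ^∞⟮IM; F, V⟯) :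
    ContMDiff IM 𝓘(ℝ, F) ∞ fun y => χ y • (e (TotalSpace.mk' F y (s y))).2 := by
  intro y₀
  by_cases hy₀ : y₀ ∈ e.baseSet
  · set e' := trivializationAt F V y₀ with he'
    have hy₀' : y₀ ∈ e'.baseSet := mem_baseSet_trivializationAt F V y₀
    have hs := s.contMDiff y₀
    rw [Bundle.contMDiffAt_section] at hs
    have h1 : ContMDiffAt IM 𝓘(ℝ, F) ∞
        (fun y => χ y • ((e'.coordChangeL ℝ e y : F →L[ℝ] F)
          ((e' (TotalSpace.mk' F y (s y))).2))) y₀ :=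
      (χ.contMDiff y₀).smul ((contMDiffAt_id.coordChangeL hy₀' hy₀).clm_apply hs)
    refine h1.congr_of_eventuallyEq ?_
    filter_upwards [(e'.open_baseSet.inter e.open_baseSet).mem_nhds ⟨hy₀', hy₀⟩] with y hy
    show χ y • (e (TotalSpace.mk' F y (s y))).2
      = χ y • e'.coordChangeL ℝ e y ((e' (TotalSpace.mk' F y (s y))).2)
    rw [e'.coordChangeL_apply e hy, e'.symm_apply_apply_mk hy.1]
  · have hy₀s : y₀ ∉ tsupport ⇑χ := fun h => hy₀ (hχ h)
    refine (contMDiffAt_const (c := (0 : F))).congr_of_eventuallyEq ?_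
    filter_upwards [(isOpen_compl_iff.mpr (isClosed_tsupport ⇑χ)).mem_nhds hy₀s] with y hy
    rw [image_eq_zero_of_notMem_tsupport hy, zero_smul]

set_option linter.unusedSectionVars false in
lemma aux_coe_sum {ι : Type*} (t : Finset ι) (f : ι → Cₛ^∞⟮IM; F, V⟯) (y : M) :
    (∑ i ∈ t, f i) y = ∑ i ∈ t, f i y := by
  classical
  induction t using Finset.induction_on with
  | empty => rfl
  | insert _ _ h ih =>
    rw [Finset.sum_insert h, Finset.sum_insert h, ← ih]
    rfl

end Aux

/-- The module of sections of a smooth complex vector bundle of constant rank `k` over a compact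
manifold has constant rank `k`: every quotient `Γ^∞(E)/(I_x · Γ^∞(E))` has dimension `k`. -/
theorem sections_constant_rank (k : ℕ) (hk : ∀ x : M, Module.finrank ℂ (V x) = k) (x : M) :
    FiniteDimensional ℂ (Cₛ^∞⟮IM; F, V⟯ ⧸
      (SmoothMap.idealOfPoint (IM := IM) x • (⊤ : Submodule C^∞⟮IM, M; 𝓘(ℝ, ℂ), ℂ⟯ Cₛ^∞⟮IM; F, V⟯))) ∧
    Module.finrank ℂ (Cₛ^∞⟮IM; F, V⟯ ⧸
      (SmoothMap.idealOfPoint (IM := IM) x • (⊤ : Submodule C^∞⟮IM, M; 𝓘(ℝ, ℂ), ℂ⟯ Cₛ^∞⟮IM; F, V⟯))) = k := by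
  classical
  set N : Submodule C^∞⟮IM, M; 𝓘(ℝ, ℂ), ℂ⟯ Cₛ^∞⟮IM; F, V⟯ :=
    SmoothMap.idealOfPoint (IM := IM) x • ⊤ with hNdef
  set e := trivializationAt F V x with he
  have hx : x ∈ e.baseSet := mem_baseSet_trivializationAt F V x
  obtain ⟨χ, hχ1, hχsupp⟩ := aux_exists_bump (IM := IM) x e.open_baseSet hx
  -- the evaluation map at `x`
  let ev : Cₛ^∞⟮IM; F, V⟯ →ₗ[ℂ] V x :=
    { toFun := fun s => s x
      map_add' := fun s t => rfl
      map_smul' := fun c s => rfl }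
  -- evaluation is surjective
  have hsurj : Function.Surjective ev := by
    intro v
    refine ⟨⟨fun y => χ y • e.symm y ((e (TotalSpace.mk' F x v)).2),
      aux_contMDiff_section e χ hχsupp _⟩, ?_⟩
    show χ x • e.symm x ((e (TotalSpace.mk' F x v)).2) = v
    rw [hχ1, e.symm_apply_apply_mk hx, one_smul]
  -- elements of `N` vanish at `x`
  have hNle : ∀ s ∈ N, s x = 0 := by
    intro s hs
    refine Submodule.smul_induction_on hs ?_ ?_
    · intro f hf t _
      have hf0 : f x = 0 := hf
      show f x • t x = 0
      rw [hf0, zero_smul]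
    · intro a b ha hb
      show a x + b x = 0
      rw [ha, hb, add_zero]
  -- sections vanishing at `x` lie in `N`
  have hker : ∀ s : Cₛ^∞⟮IM; F, V⟯, s x = 0 → s ∈ N := by
    intro s hs
    let n := Module.finrank ℂ F
    let b : Module.Basis (Fin n) ℂ F := Module.finBasis ℂ F
    let χc : C^∞⟮IM, M; 𝓘(ℝ, ℂ), ℂ⟯ :=
      ⟨fun y => (χ y : ℂ), Complex.ofRealCLM.contDiff.comp_contMDiff χ.contMDiff⟩
    let u : M → F := fun y => χ y • (e (TotalSpace.mk' F y (s y))).2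
    have hu : ContMDiff IM 𝓘(ℝ, F) ∞ u := aux_contMDiff_read e χ hχsupp s
    let ℓ : Fin n → (F →L[ℂ] ℂ) := fun i => LinearMap.toContinuousLinearMap (b.coord i)
    let g : Fin n → C^∞⟮IM, M; 𝓘(ℝ, ℂ), ℂ⟯ := fun i =>
      ⟨fun y => ℓ i (u y), ((ℓ i).restrictScalars ℝ).contDiff.comp_contMDiff hu⟩
    let t : Fin n → Cₛ^∞⟮IM; F, V⟯ := fun i =>
      ⟨fun y => χ y • e.symm y (b i), aux_contMDiff_section e χ hχsupp (b i)⟩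
    have hdecomp : s = (1 - χc * χc) • s + ∑ i, g i • t i := by
      apply ContMDiffSection.ext
      intro y
      have hsum : (((1 - χc * χc) • s + ∑ i, g i • t i : Cₛ^∞⟮IM; F, V⟯)) y
          = (1 - (χ y : ℂ) * (χ y : ℂ)) • s y
            + ∑ i, (ℓ i (u y)) • ((χ y : ℝ) • e.symm y (b i)) := by
        show ((1 - χc * χc) • s) y + (∑ i, g i • t i) y = _
        rw [aux_coe_sum]
        rfl
      rw [hsum]
      by_cases hy : y ∈ e.baseSet
      · set w : F := (e (TotalSpace.mk' F y (s y))).2 with hw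
        have hsymm : e.symm y w = s y := e.symm_apply_apply_mk hy (s y)
        have hterm : ∀ i : Fin n, (ℓ i (u y)) • ((χ y : ℝ) • e.symm y (b i))
            = ((χ y : ℂ) * (χ y : ℂ)) • ((b.repr w i) • (e.symmL ℂ y (b i))) := by
          intro i
          have h2 : ℓ i w = b.repr w i := by simp [ℓ, Module.Basis.coord_apply]
          have h1 : ℓ i (u y) = (χ y : ℂ) * (b.repr w i) := by
            show ℓ i ((χ y : ℝ) • w) = _
            rw [show (χ y : ℝ) • w = (χ y : ℂ) • w from rfl, map_smul, smul_eq_mul, h2]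
          show (ℓ i (u y)) • ((χ y : ℝ) • e.symm y (b i)) = _
          rw [show ((χ y : ℝ) • e.symm y (b i) : V y) = (χ y : ℂ) • e.symm y (b i) from rfl,
            h1, smul_smul]
          rw [show (e.symm y (b i) : V y) = e.symmL ℂ y (b i) by
            rw [Trivialization.symmL_apply]; exact hy, smul_smul]
          congr 1
          ring
        rw [Finset.sum_congr rfl fun i _ => hterm i, ← Finset.smul_sum]
        have hlin : e.symmL ℂ y w = ∑ i, (b.repr w i) • (e.symmL ℂ y (b i)) := by
          conv_lhs => rw [← b.sum_repr w]
          rw [map_sum]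
          exact Finset.sum_congr rfl fun i _ => map_smul _ _ _
        have hsymmL : e.symmL ℂ y w = s y := by
          rw [Trivialization.symmL_apply, hsymm]; exact hy
        rw [← hlin, hsymmL, sub_smul, one_smul, mul_smul]
        have : (χ y : ℂ) • (χ y : ℂ) • s y = ((χ y :ℂ) * (χ y : ℂ)) • s y := by
          rw [mul_smul]
        rw [this]
        abel
      · have hy0 : χ y = 0 := image_eq_zero_of_notMem_tsupport fun h => hy (hχsupp h)
        have hu0 : u y = 0 := by show (χ y : ℝ) • _ = 0; rw [hy0, zero_smul]
        simp [hy0, hu0]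
    rw [hdecomp]
    refine N.add_mem (Submodule.smul_mem_smul ?_ Submodule.mem_top)
      (Submodule.sum_mem _ fun i _ => Submodule.smul_mem_smul ?_ Submodule.mem_top)
    · show (1 - χc * χc) x = 0
      have : (1 - χc * χc) x = 1 - (χ x : ℂ) * (χ x : ℂ) := rfl
      rw [this, hχ1]
      norm_num
    · show g i x = 0
      have hu0 : u x = 0 := by
        show (χ x : ℝ) • (e (TotalSpace.mk' F x (s x))).2 = 0
        rw [hs]
        have : (e (TotalSpace.mk' F x (0 : V x))).2 = 0 := (e.linear ℂ hx).map_zero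
        rw [this, smul_zero]
      show ℓ i (u x) = 0
      rw [hu0, map_zero]
  -- assemble the linear equivalence with the fiber
  have hle : N.restrictScalars ℂ ≤ LinearMap.ker ev :=
    fun s hs => LinearMap.mem_ker.mpr (hNle s hs)
  let φ := (N.restrictScalars ℂ).liftQ ev hle
  have hφinj : Function.Injective φ := by
    rw [← LinearMap.ker_eq_bot]
    exact Submodule.ker_liftQ_eq_bot _ _ _ fun s hs => hker s (LinearMap.mem_ker.mp hs)
  have hφsurj : Function.Surjective φ := by
    intro v
    obtain ⟨s, hsv⟩ := hsurj v
    exact ⟨Submodule.Quotient.mk s, hsv⟩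
  let E1 : (Cₛ^∞⟮IM; F, V⟯ ⧸ N.restrictScalars ℂ) ≃ₗ[ℂ] V x :=
    LinearEquiv.ofBijective φ ⟨hφinj, hφsurj⟩
  let E : (Cₛ^∞⟮IM; F, V⟯ ⧸ N) ≃ₗ[ℂ] V x :=
    (Submodule.Quotient.restrictScalarsEquiv ℂ N).symm.trans E1
  have hfd : FiniteDimensional ℂ (V x) :=
    LinearEquiv.finiteDimensional (e.linearEquivAt ℂ x hx).symm
  refine ⟨LinearEquiv.finiteDimensional E.symm, ?_⟩
  rw [E.finrank_eq, hk x]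

end
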